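/- Let h be a real symmetric 2×2 matrix with trace H = tr(h) ≥ 0, and suppose h − ε·H·I is positive semidefinite for some ε > 0. Then for every vector w ∈ ℝ² one has Σ_{i,k,l=1}^{2} ( w_i·h_{kl} − w_k·h_{il} )² ≥ 2·ε²·H²·|w|²; equivalently, |w|²·|h|² − |h·w|² ≥ ε²·H²·|w|², where |h|² = Σ_{i,j} h_{ij}² is the squared Frobenius norm and h·w denotes the matrix–vector product. -/

import Mathlib

/-- Pointwise squeeze inequality (Lemma 6.6): for a symmetric 2×2 matrix h with
h ≥ εH·I, H = tr h ≥ 0, and any vector w,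
Σ (wᵢh_{kl} − w_kh_{il})² ≥ 2ε²H²|w|²; equivalently |w|²|h|² − |hw|² ≥ ε²H²|w|². -/
theorem stmt_7 (h : Matrix (Fin 2) (Fin 2) ℝ) (hs : h.IsSymm)
    (ε : ℝ) (hε : 0 < ε) (H : ℝ) (hH : H = Matrix.trace h) (hH0 : 0 ≤ H)
    (hpinch : (h - (ε * H) • (1 : Matrix (Fin 2) (Fin 2) ℝ)).PosSemidef)
    (w : Fin 2 → ℝ) :
    (2 * ε ^ 2 * H ^ 2 * (∑ i, w i ^ 2) ≤
      ∑ i, ∑ k, ∑ l, (w i * h k l - w k * h i l) ^ 2) ∧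
    (ε ^ 2 * H ^ 2 * (∑ i, w i ^ 2) ≤
      (∑ i, w i ^ 2) * (∑ i, ∑ j, h i j ^ 2) - ∑ i, (h.mulVec w i) ^ 2) := by
  have hb : h 1 0 = h 0 1 := hs.apply 0 1
  have hq := hpinch.dotProduct_mulVec_nonneg ![w 1, -w 0]
  simp [Matrix.mulVec, dotProduct, Fin.sum_univ_two, Matrix.sub_apply,
    Matrix.smul_apply, Matrix.one_apply, hb] at hq
  have hs0 : 0 ≤ ε * H := mul_nonneg hε.le hH0
  have h1 : 0 ≤ (h 0 0 - ε * H) * w 1 ^ 2 - 2 * h 0 1 * w 0 * w 1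
      + (h 1 1 - ε * H) * w 0 ^ 2 := by nlinarith [hq]
  have key : 0 ≤ 2 * (ε * H) * ((h 0 0 - ε * H) * w 1 ^ 2 - 2 * h 0 1 * w 0 * w 1 + (h 1 1 - ε * H) * w 0 ^ 2)
      + ((h 1 1 - ε * H) * w 0 - h 0 1 * w 1) ^ 2
      + ((h 0 0 - ε * H) * w 1 - h 0 1 * w 0) ^ 2 := by
    nlinarith [mul_nonneg hs0 h1, sq_nonneg ((h 1 1 - ε * H) * w 0 - h 0 1 * w 1),
      sq_nonneg ((h 0 0 - ε * H) * w 1 - h 0 1 * w 0)]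
  simp only [Fin.sum_univ_two, Matrix.mulVec, dotProduct, hb]
  constructor <;> nlinarith [key]
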